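/- Let K be a quadratic number field, and let 𝒜 be a nonzero ideal of O_K coprime to 2D_K. Then for any rational integer m, the quadratic residue symbol (m/𝒜)_K equals the Jacobi symbol (m/N(𝒜)) in Q. -/
import Mathlib

open NumberField

open scoped Classical in
/-- The quadratic residue symbol `(a/𝔭)_K` on prime ideals of odd norm. -/
noncomputable def quadResSym (K : Type*) [Field K] [NumberField K]
    (𝔭 : Ideal (𝓞 K)) (a : 𝓞 K) : ℤ :=
  if a ∈ 𝔭 then 0
  else if a ^ ((Ideal.absNorm 𝔭 - 1) / 2) - 1 ∈ 𝔭 then 1 else -1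

/-- The quadratic residue symbol `(a/𝒜)_K`, extended multiplicatively over the
prime ideal factorization of `𝒜`. -/
noncomputable def quadResSymIdeal (K : Type*) [Field K] [NumberField K]
    (𝒜 : Ideal (𝓞 K)) (a : 𝓞 K) : ℤ :=
  ((UniqueFactorizationMonoid.normalizedFactors 𝒜).map
    (fun 𝔭 => quadResSym K 𝔭 a)).prod

set_option maxHeartbeats 1000000 in
set_option synthInstance.maxHeartbeats 1000000 in
lemma quadResSym_prime_eq (K : Type*) [Field K] [NumberField K]
    (𝔭 : Ideal (𝓞 K)) (hp : 𝔭.IsPrime) (hb : 𝔭 ≠ ⊥) (h2 : (2 : 𝓞 K) ∉ 𝔭) (m : ℤ) :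
    quadResSym K 𝔭 (m : 𝓞 K) = jacobiSym m (Ideal.absNorm 𝔭) := by
  haveI := hp
  have hN0 : Ideal.absNorm 𝔭 ≠ 0 := by
    rw [Ne, Ideal.absNorm_eq_zero_iff]; exact hb
  haveI : Finite (𝓞 K ⧸ 𝔭) := (Ideal.absNorm_ne_zero_iff 𝔭).mp hN0
  letI : Fintype (𝓞 K ⧸ 𝔭) := Fintype.ofFinite _
  set p := ringChar (𝓞 K ⧸ 𝔭) with hpdef
  haveI : CharP (𝓞 K ⧸ 𝔭) p := ringChar.charP _
  haveI hpp : Fact p.Prime := ⟨CharP.char_is_prime (𝓞 K ⧸ 𝔭) p⟩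
  -- cardinality is a power of p
  letI : Module (ZMod p) (𝓞 K ⧸ 𝔭) :=
    (ZMod.castHom dvd_rfl (𝓞 K ⧸ 𝔭) : ZMod p →+* (𝓞 K ⧸ 𝔭)).toModule
  obtain ⟨n, hcard⟩ := VectorSpace.card_fintype (ZMod p) (𝓞 K ⧸ 𝔭)
  rw [ZMod.card] at hcard
  have hn0 : n ≠ 0 := by
    rintro rfl
    rw [pow_zero] at hcard
    exact (Fintype.one_lt_card (α := 𝓞 K ⧸ 𝔭)).ne' hcard
  have hNcard : Ideal.absNorm 𝔭 = p ^ n := by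
    rw [Ideal.absNorm_apply, Submodule.cardQuot_apply, Nat.card_eq_fintype_card, hcard]
  -- p is odd
  have h2R : (Ideal.Quotient.mk 𝔭) (2 : 𝓞 K) ≠ 0 := by
    rw [Ne, Ideal.Quotient.eq_zero_iff_mem]; exact h2
  have hpne2 : p ≠ 2 := by
    intro h
    apply h2R
    have h0 : ((2 : ℕ) : 𝓞 K ⧸ 𝔭) = 0 := by
      rw [← h]; exact CharP.cast_eq_zero _ p
    rw [map_ofNat, ← Nat.cast_ofNat, h0]
  have hodd : p % 2 = 1 := hpp.out.eq_two_or_odd.resolve_left hpne2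
  -- the map ZMod p → R
  let φ : ZMod p →+* (𝓞 K ⧸ 𝔭) := ZMod.castHom dvd_rfl _
  have hφinj : Function.Injective φ := φ.injective
  have hxφ : (Ideal.Quotient.mk 𝔭) ((m : ℤ) : 𝓞 K) = φ ((m : ℤ) : ZMod p) := by
    rw [map_intCast, map_intCast]
  -- membership iff legendre symbol zero
  have hmem : ((m : ℤ) : 𝓞 K) ∈ 𝔭 ↔ ((m : ℤ) : ZMod p) = 0 := by
    rw [← Ideal.Quotient.eq_zero_iff_mem, hxφ]
    constructor
    · intro h; apply hφinj; rw [h, map_zero]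
    · intro h; rw [h, map_zero]
  -- exponent arithmetic
  set t := ∑ i ∈ Finset.range n, p ^ i with ht
  have hgeom : (p - 1) * t = p ^ n - 1 := by
    have h1 : (1 : ℕ) ≤ p := hpp.out.one_lt.le
    have h2 : (1 : ℕ) ≤ p ^ n := Nat.one_le_pow _ _ hpp.out.pos
    have hgs := geom_sum_mul (p : ℤ) n
    have hcast : ((p - 1 : ℕ) : ℤ) * (t : ℤ) = ((p ^ n - 1 : ℕ) : ℤ) := by
      rw [Nat.cast_sub h1, Nat.cast_sub h2, ht]
      push_cast
      rw [← hgs]; ring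
    exact_mod_cast hcast
  have hexp : (p ^ n - 1) / 2 = (p / 2) * t := by
    have hsub : p - 1 = 2 * (p / 2) := by omega
    rw [← hgeom, hsub, mul_assoc, Nat.mul_div_cancel_left _ (by norm_num : 0 < 2)]
  have hpar' : ∀ N : ℕ, (∑ i ∈ Finset.range N, p ^ i) % 2 = N % 2 := by
    intro N
    induction N with
    | zero => simp
    | succ k ih =>
      rw [Finset.sum_range_succ]
      have hpk : p ^ k % 2 = 1 := Nat.odd_iff.mp ((Nat.odd_iff.mpr hodd).pow)
      omega
  have hpar : t % 2 = n % 2 := hpar' n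
  -- the key power computation
  have hxpow : (Ideal.Quotient.mk 𝔭) ((m : ℤ) : 𝓞 K) ^ ((Ideal.absNorm 𝔭 - 1) / 2)
      = ((legendreSym p m : ℤ) : 𝓞 K ⧸ 𝔭) ^ t := by
    rw [hNcard, hexp, pow_mul, hxφ, ← map_pow]
    congr 1
    rw [← map_intCast φ (legendreSym p m : ℤ)]
    congr 1
    rw [← legendreSym.eq_pow]
  -- second condition translation
  have hcond : (((m : ℤ) : 𝓞 K) ^ ((Ideal.absNorm 𝔭 - 1) / 2) - 1 ∈ 𝔭)
      ↔ ((legendreSym p m : ℤ) : 𝓞 K ⧸ 𝔭) ^ t = 1 := by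
    rw [← Ideal.Quotient.eq_zero_iff_mem, map_sub, map_pow, map_one, sub_eq_zero, hxpow]
  have hjac : jacobiSym m (Ideal.absNorm 𝔭) = legendreSym p m ^ n := by
    rw [hNcard, jacobiSym.pow_right, ← jacobiSym.legendreSym.to_jacobiSym]
  rw [hjac]
  unfold quadResSym
  by_cases hz : ((m : ℤ) : ZMod p) = 0
  · rw [if_pos (hmem.mpr hz), (legendreSym.eq_zero_iff p m).mpr hz, zero_pow hn0]
  · rw [if_neg (fun h => hz (hmem.mp h))]
    rcases legendreSym.eq_one_or_neg_one p hz with h1 | h1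
    · rw [if_pos, h1, one_pow]
      rw [hcond, h1]; norm_num
    · have hne : (-1 : 𝓞 K ⧸ 𝔭) ≠ 1 := Ring.neg_one_ne_one_of_char_ne_two hpne2
      have hLR : ((legendreSym p m : ℤ) : 𝓞 K ⧸ 𝔭) = -1 := by rw [h1]; push_cast; ring
      rcases Nat.even_or_odd n with he | he
      · have hteven : Even t := by
          rw [Nat.even_iff] at he ⊢; omega
        rw [if_pos, h1, he.neg_one_pow]
        rw [hcond, hLR, hteven.neg_one_pow]
      · have htodd : Odd t := by
          rw [Nat.odd_iff] at he ⊢; omega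
        rw [if_neg, h1, he.neg_one_pow]
        rw [hcond, hLR, htodd.neg_one_pow]
        exact fun h => hne h

/-- For a quadratic number field `K` and a nonzero ideal `𝒜` of `O_K` coprime to
`2 D_K`, the quadratic residue symbol `(m/𝒜)_K` equals the Jacobi symbol
`(m/N(𝒜))` for every rational integer `m`. -/
theorem quadResSymIdeal_eq_jacobiSym
    (K : Type*) [Field K] [NumberField K] (hK : Module.finrank ℚ K = 2)
    (𝒜 : Ideal (𝓞 K)) (h𝒜 : 𝒜 ≠ ⊥)
    (hcop : IsCoprime 𝒜 (Ideal.span {((2 * discr K : ℤ) : 𝓞 K)})) :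
    ∀ m : ℤ, quadResSymIdeal K 𝒜 (m : 𝓞 K) = jacobiSym m (Ideal.absNorm 𝒜) := by
  intro m
  have h𝒜0 : 𝒜 ≠ 0 := h𝒜
  have hfac : ∀ 𝔭 ∈ UniqueFactorizationMonoid.normalizedFactors 𝒜,
      quadResSym K 𝔭 ((m : ℤ) : 𝓞 K) = jacobiSym m (Ideal.absNorm 𝔭) ∧
      Ideal.absNorm 𝔭 ≠ 0 := by
    intro 𝔭 hmem
    have hprime : Prime 𝔭 := UniqueFactorizationMonoid.prime_of_normalized_factor 𝔭 hmem
    have hP : 𝔭.IsPrime := Ideal.isPrime_of_prime hprime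
    have hbot : 𝔭 ≠ ⊥ := hprime.ne_zero
    have h2 : (2 : 𝓞 K) ∉ 𝔭 := by
      intro h2m
      have hle1 : 𝒜 ≤ 𝔭 :=
        Ideal.le_of_dvd (UniqueFactorizationMonoid.dvd_of_mem_normalizedFactors hmem)
      have hle2 : Ideal.span {((2 * discr K : ℤ) : 𝓞 K)} ≤ 𝔭 := by
        rw [Ideal.span_le, Set.singleton_subset_iff]
        have hcast : ((2 * discr K : ℤ) : 𝓞 K) = 2 * ((discr K : ℤ) : 𝓞 K) := by
          push_cast; ring
        rw [hcast]
        exact Ideal.mul_mem_right _ _ h2m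
      have htop : (⊤ : Ideal (𝓞 K)) ≤ 𝔭 := by
        rw [← Ideal.isCoprime_iff_sup_eq.mp hcop]
        exact sup_le hle1 hle2
      exact hP.ne_top (top_le_iff.mp htop)
    refine ⟨quadResSym_prime_eq K 𝔭 hP hbot h2 m, ?_⟩
    rw [Ne, Ideal.absNorm_eq_zero_iff]; exact hbot
  have hprod : 𝒜 = (UniqueFactorizationMonoid.normalizedFactors 𝒜).prod :=
    (associated_iff_eq.mp (UniqueFactorizationMonoid.prod_normalizedFactors h𝒜0)).symm
  have hnorm : Ideal.absNorm 𝒜 =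
      ((UniqueFactorizationMonoid.normalizedFactors 𝒜).map Ideal.absNorm).prod := by
    conv_lhs => rw [hprod]
    exact map_multiset_prod (Ideal.absNorm : Ideal (𝓞 K) →*₀ ℕ) _
  rw [quadResSymIdeal, hnorm]
  revert hfac
  refine Multiset.induction_on (UniqueFactorizationMonoid.normalizedFactors 𝒜) ?_ ?_
  · intro _; simp [jacobiSym.one_right]
  · intro 𝔭 S ih h
    have h𝔭 := h 𝔭 (Multiset.mem_cons_self 𝔭 S)
    have hS : ∀ 𝔮 ∈ S, quadResSym K 𝔮 ((m : ℤ) : 𝓞 K) = jacobiSym m (Ideal.absNorm 𝔮) ∧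
        Ideal.absNorm 𝔮 ≠ 0 := fun 𝔮 hq => h 𝔮 (Multiset.mem_cons_of_mem hq)
    have hSprod : (S.map Ideal.absNorm).prod ≠ 0 := by
      rw [Ne, Multiset.prod_eq_zero_iff]
      intro hz
      obtain ⟨𝔮, hq, hq0⟩ := Multiset.mem_map.mp hz
      exact (hS 𝔮 hq).2 hq0
    rw [Multiset.map_cons, Multiset.map_cons, Multiset.prod_cons, Multiset.prod_cons,
      jacobiSym.mul_right' m h𝔭.2 hSprod, ih hS, h𝔭.1]
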